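/- Fix an integer n ≥ 2 and set b := -n + i. Let D ⊆ {0, 1, …, n²} satisfy |d − d'| ≠ 1 for all d, d' ∈ D. Let k ≥ 1 and let (d_1, …, d_k) and (d'_1, …, d'_k) be tuples with all d_j, d'_j ∈ D such that d_j ≠ d'_j for some index 1 ≤ j ≤ k. Then the k-tiles T_{d_1…d_k} and T_{d'_1…d'_k} of T_n are disjoint. -/

import Mathlib

open Complex Filter Pointwise

/-- `piSum b d = ∑_{j≥1} d_j b^{-j}` (0-indexed: `d j` is the `(j+1)`-st digit). -/
noncomputable def piSum (b : ℂ) (d : ℕ → ℤ) : ℂ :=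
  ∑' j : ℕ, (d j : ℂ) * b ^ (-((j : ℤ) + 1))

/-- The `n`-th fundamental tile `T_n`. -/
def fundTile (n : ℕ) : Set ℂ :=
  {z | ∃ d : ℕ → ℤ, (∀ j, 0 ≤ d j ∧ d j ≤ (n : ℤ) ^ 2) ∧
    z = piSum (-(n : ℂ) + Complex.I) d}

/-- The `k`-tile of a set `T` with digits `d_1, …, d_k` (0-indexed). -/
def kTile (b : ℂ) (T : Set ℂ) (k : ℕ) (d : Fin k → ℤ) : Set ℂ :=
  {z | ∃ t ∈ T, z = (∑ j : Fin k, (d j : ℂ) * b ^ (-((j : ℤ) + 1))) + b ^ (-(k : ℤ)) * t}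

namespace Stmt5

noncomputable def bC (n : ℕ) : ℂ := -(n : ℂ) + Complex.I

lemma bC_re (n : ℕ) : (bC n).re = -(n : ℝ) := by simp [bC]

lemma bC_im (n : ℕ) : (bC n).im = 1 := by simp [bC]

lemma sq_abs_bC (n : ℕ) : (‖bC n‖) ^ 2 = (n : ℝ) ^ 2 + 1 := by
  rw [Complex.sq_norm, Complex.normSq_apply, bC_re, bC_im]; ring

lemma bC_ne_zero (n : ℕ) : bC n ≠ 0 := by
  intro h
  have := bC_im n
  rw [h] at this
  simp at this

lemma le_abs_bC (n : ℕ) : (n : ℝ) ≤ ‖bC n‖ := by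
  have h1 := sq_abs_bC n
  have h2 : 0 ≤ ‖bC n‖ := norm_nonneg (bC n)
  nlinarith [Nat.cast_nonneg (α := ℝ) n]

lemma term_norm (n : ℕ) (f : ℕ → ℤ) (j : ℕ) :
    ‖(f j : ℂ) * (bC n) ^ (-((j : ℤ) + 1))‖
      = |(f j : ℝ)| * ((‖bC n‖)⁻¹) ^ (j + 1) := by
  have he : (-((j : ℤ) + 1)) = -((j + 1 : ℕ) : ℤ) := by push_cast; ring
  rw [he, norm_mul, norm_zpow]
  rw [zpow_neg, zpow_natCast, ← inv_pow]
  congr 1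
  rw [Complex.norm_intCast]

lemma term_norm_le (n : ℕ) (hn : 2 ≤ n) {f : ℕ → ℤ} (hf : ∀ j, |f j| ≤ (n : ℤ) ^ 2) (j : ℕ) :
    ‖(f j : ℂ) * (bC n) ^ (-((j : ℤ) + 1))‖ ≤ (n : ℝ) ^ 2 * ((n : ℝ)⁻¹) ^ (j + 1) := by
  rw [term_norm]
  have hn0 : (0 : ℝ) < n := by positivity
  have h1 : |(f j : ℝ)| ≤ (n : ℝ) ^ 2 := by
    have := hf j
    have : ((|f j| : ℤ) : ℝ) ≤ (((n : ℤ) ^ 2 : ℤ) : ℝ) := by exact_mod_cast this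
    push_cast at this
    exact this
  have h2 : (‖bC n‖)⁻¹ ≤ (n : ℝ)⁻¹ := by
    apply inv_anti₀ hn0 (le_abs_bC n)
  have h3 : (0 : ℝ) ≤ (‖bC n‖)⁻¹ := by positivity
  exact mul_le_mul h1 (pow_le_pow_left₀ h3 h2 _) (by positivity) (by positivity)


lemma summable_aux (n : ℕ) (hn : 2 ≤ n) {f : ℕ → ℤ} (hf : ∀ j, |f j| ≤ (n : ℤ) ^ 2) :
    Summable (fun j : ℕ => (f j : ℂ) * (bC n) ^ (-((j : ℤ) + 1))) := by
  have hx0 : (0:ℝ) ≤ (n:ℝ)⁻¹ := by positivity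
  have hx1 : (n:ℝ)⁻¹ < 1 := by
    rw [inv_lt_one_iff₀]; right; exact_mod_cast by omega
  have hg : Summable (fun j : ℕ => (n : ℝ) ^ 2 * ((n : ℝ)⁻¹) ^ (j + 1)) := by
    have := (summable_geometric_of_lt_one hx0 hx1).mul_left ((n:ℝ)^2 * (n:ℝ)⁻¹)
    exact this.congr (fun j => by ring)
  exact Summable.of_norm_bounded hg (term_norm_le n hn hf)

lemma norm_piSum_le (n : ℕ) (hn : 2 ≤ n) {f : ℕ → ℤ} (hf : ∀ j, |f j| ≤ (n : ℤ) ^ 2) :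
    ‖piSum (bC n) f‖ ≤ 2 * n := by
  have hx0 : (0:ℝ) ≤ (n:ℝ)⁻¹ := by positivity
  have hx1 : (n:ℝ)⁻¹ < 1 := by
    rw [inv_lt_one_iff₀]; right; exact_mod_cast by omega
  have hgeo := summable_geometric_of_lt_one hx0 hx1
  have hg : Summable (fun j : ℕ => (n : ℝ) ^ 2 * ((n : ℝ)⁻¹) ^ (j + 1)) := by
    have := hgeo.mul_left ((n:ℝ)^2 * (n:ℝ)⁻¹)
    exact this.congr (fun j => by ring)
  have hnorm : Summable (fun j : ℕ => ‖(f j : ℂ) * (bC n) ^ (-((j : ℤ) + 1))‖) :=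
    Summable.of_nonneg_of_le (fun j => norm_nonneg _) (term_norm_le n hn hf) hg
  have h1 : ‖piSum (bC n) f‖ ≤ ∑' j : ℕ, ‖(f j : ℂ) * (bC n) ^ (-((j : ℤ) + 1))‖ :=
    norm_tsum_le_tsum_norm hnorm
  have h2 : ∑' j : ℕ, ‖(f j : ℂ) * (bC n) ^ (-((j : ℤ) + 1))‖
      ≤ ∑' j : ℕ, (n : ℝ) ^ 2 * ((n : ℝ)⁻¹) ^ (j + 1) :=
    Summable.tsum_le_tsum (term_norm_le n hn hf) hnorm hg
  have h3 : ∑' j : ℕ, (n : ℝ) ^ 2 * ((n : ℝ)⁻¹) ^ (j + 1) = (n:ℝ)^2 * (n:ℝ)⁻¹ * (1 - (n:ℝ)⁻¹)⁻¹ := by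
    have : ∀ j : ℕ, (n : ℝ) ^ 2 * ((n : ℝ)⁻¹) ^ (j + 1) = ((n:ℝ)^2 * (n:ℝ)⁻¹) * ((n:ℝ)⁻¹) ^ j := by
      intro j; ring
    simp_rw [this]
    rw [tsum_mul_left, tsum_geometric_of_lt_one hx0 hx1]
  have hn2 : (2:ℝ) ≤ (n:ℝ) := by exact_mod_cast hn
  have h4 : (n:ℝ)^2 * (n:ℝ)⁻¹ * (1 - (n:ℝ)⁻¹)⁻¹ ≤ 2 * n := by
    have hn0 : (0:ℝ) < n := by linarith
    rw [show (n:ℝ)^2 * (n:ℝ)⁻¹ = n by field_simp]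
    rw [show (1 - (n:ℝ)⁻¹)⁻¹ = n / (n - 1) by field_simp]
    rw [mul_div_assoc', div_le_iff₀ (by linarith)]
    nlinarith
  linarith


lemma piSum_mul_b (n : ℕ) (hn : 2 ≤ n) {f : ℕ → ℤ} (hf : ∀ j, |f j| ≤ (n : ℤ) ^ 2) :
    piSum (bC n) f * bC n = (f 0 : ℂ) + piSum (bC n) (fun j => f (j + 1)) := by
  have hb := bC_ne_zero n
  unfold piSum
  rw [← tsum_mul_right]
  have h1 : ∀ j : ℕ, (f j : ℂ) * (bC n) ^ (-((j : ℤ) + 1)) * bC n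
      = (f j : ℂ) * (bC n) ^ (-(j : ℤ)) := by
    intro j
    rw [mul_assoc]
    congr 1
    rw [← zpow_add_one₀ hb]
    congr 1
    ring
  simp_rw [h1]
  have hs : Summable (fun j : ℕ => (f j : ℂ) * (bC n) ^ (-(j : ℤ))) := by
    have := (summable_aux n hn hf).mul_right (bC n)
    exact this.congr (fun j => h1 j)
  rw [Summable.tsum_eq_zero_add hs]
  simp only [Nat.cast_zero, neg_zero, zpow_zero, mul_one]
  congr 1

lemma piSum_shift (n : ℕ) (hn : 2 ≤ n) (k : ℕ) {f : ℕ → ℤ} (hf : ∀ j, |f j| ≤ (n : ℤ) ^ 2)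
    (h0 : ∀ t, t < k → f t = 0) :
    piSum (bC n) f = (bC n) ^ (-(k : ℤ)) * piSum (bC n) (fun t => f (t + k)) := by
  induction k generalizing f with
  | zero => simp [piSum]
  | succ k ih =>
    have hb := bC_ne_zero n
    have e1 := piSum_mul_b n hn hf
    rw [h0 0 (by omega)] at e1
    have e2 : piSum (bC n) f = (bC n)⁻¹ * piSum (bC n) (fun j => f (j + 1)) := by
      field_simp
      linear_combination e1
    have e3 := ih (f := fun j => f (j + 1)) (fun j => hf _) (fun t ht => h0 (t + 1) (by omega))
    rw [e2, e3]
    have e4 : (fun t => (fun j => f (j + 1)) (t + k)) = (fun t => f (t + (k + 1))) := by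
      funext t; simp only []; congr 1
    rw [e4, ← mul_assoc]
    congr 1
    rw [← zpow_neg_one, ← zpow_add₀ hb]
    congr 1
    push_cast
    ring

lemma piSum_add (n : ℕ) (hn : 2 ≤ n) {f g : ℕ → ℤ} (hf : ∀ j, |f j| ≤ (n : ℤ) ^ 2)
    (hg : ∀ j, |g j| ≤ (n : ℤ) ^ 2) :
    piSum (bC n) (fun t => f t + g t) = piSum (bC n) f + piSum (bC n) g := by
  unfold piSum
  rw [← Summable.tsum_add (summable_aux n hn hf) (summable_aux n hn hg)]
  apply tsum_congr
  intro j
  push_cast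
  ring

lemma piSum_sub (n : ℕ) (hn : 2 ≤ n) {f g : ℕ → ℤ} (hf : ∀ j, |f j| ≤ (n : ℤ) ^ 2)
    (hg : ∀ j, |g j| ≤ (n : ℤ) ^ 2) :
    piSum (bC n) (fun t => f t - g t) = piSum (bC n) f - piSum (bC n) g := by
  unfold piSum
  rw [← Summable.tsum_sub (summable_aux n hn hf) (summable_aux n hn hg)]
  apply tsum_congr
  intro j
  push_cast
  ring

lemma piSum_fin (n : ℕ) (k : ℕ) (g : ℕ → ℤ) (hg : ∀ t, k ≤ t → g t = 0) :
    piSum (bC n) g = ∑ j : Fin k, (g j : ℂ) * (bC n) ^ (-((j : ℤ) + 1)) := by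
  unfold piSum
  rw [tsum_eq_sum (s := Finset.range k)
    (by intro t ht; rw [hg t (by simpa using ht)]; simp)]
  rw [← Fin.sum_univ_eq_sum_range (fun t => (g t : ℂ) * (bC n) ^ (-((t : ℤ) + 1))) k]


/-- The set of all sums with digits bounded by `n^2` in absolute value. -/
def SS (n : ℕ) : Set ℂ :=
  {z | ∃ f : ℕ → ℤ, (∀ j, |f j| ≤ (n : ℤ) ^ 2) ∧ z = piSum (bC n) f}

lemma zero_mem_SS (n : ℕ) : 0 ∈ SS n := by
  refine ⟨fun _ => 0, fun j => by positivity, ?_⟩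
  simp [piSum]

noncomputable def II (n : ℕ) : ℝ := sSup ((fun z : ℂ => |z.im|) '' SS n)

noncomputable def XX (n : ℕ) : ℝ := sSup ((fun z : ℂ => |z.re|) '' SS n)

lemma mem_SS_norm (n : ℕ) (hn : 2 ≤ n) {z : ℂ} (hz : z ∈ SS n) : ‖z‖ ≤ 2 * n := by
  obtain ⟨f, hf, rfl⟩ := hz
  exact norm_piSum_le n hn hf

lemma bddI (n : ℕ) (hn : 2 ≤ n) : BddAbove ((fun z : ℂ => |z.im|) '' SS n) := by
  refine ⟨2 * n, ?_⟩
  rintro y ⟨z, hz, rfl⟩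
  have h1 := mem_SS_norm n hn hz
  have h2 : |z.im| ≤ ‖z‖ := Complex.abs_im_le_norm z
  linarith

lemma bddX (n : ℕ) (hn : 2 ≤ n) : BddAbove ((fun z : ℂ => |z.re|) '' SS n) := by
  refine ⟨2 * n, ?_⟩
  rintro y ⟨z, hz, rfl⟩
  have h1 := mem_SS_norm n hn hz
  have h2 : |z.re| ≤ ‖z‖ := Complex.abs_re_le_norm z
  linarith

lemma im_le_II (n : ℕ) (hn : 2 ≤ n) {z : ℂ} (hz : z ∈ SS n) : |z.im| ≤ II n :=
  le_csSup (bddI n hn) ⟨z, hz, rfl⟩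

lemma re_le_XX (n : ℕ) (hn : 2 ≤ n) {z : ℂ} (hz : z ∈ SS n) : |z.re| ≤ XX n :=
  le_csSup (bddX n hn) ⟨z, hz, rfl⟩

lemma II_nonneg (n : ℕ) (hn : 2 ≤ n) : 0 ≤ II n := by
  have := im_le_II n hn (zero_mem_SS n)
  simpa using this

lemma XX_nonneg (n : ℕ) (hn : 2 ≤ n) : 0 ≤ XX n := by
  have := re_le_XX n hn (zero_mem_SS n)
  simpa using this

lemma II_le (n : ℕ) (c : ℝ) (h : ∀ z ∈ SS n, |z.im| ≤ c) : II n ≤ c :=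
  csSup_le (⟨_, ⟨0, zero_mem_SS n, rfl⟩⟩) (by rintro y ⟨z, hz, rfl⟩; exact h z hz)

lemma XX_le (n : ℕ) (c : ℝ) (h : ∀ z ∈ SS n, |z.re| ≤ c) : XX n ≤ c :=
  csSup_le (⟨_, ⟨0, zero_mem_SS n, rfl⟩⟩) (by rintro y ⟨z, hz, rfl⟩; exact h z hz)

/-- the recursion relations on re and im parts. -/
lemma SS_rel (n : ℕ) (hn : 2 ≤ n) {z : ℂ} (hz : z ∈ SS n) :
    ∃ w ∈ SS n, ∃ c : ℤ, |c| ≤ (n : ℤ) ^ 2 ∧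
      z.re - (n : ℝ) * z.im = w.im ∧ -(n : ℝ) * z.re - z.im = (c : ℝ) + w.re := by
  obtain ⟨f, hf, rfl⟩ := hz
  refine ⟨piSum (bC n) (fun j => f (j + 1)), ⟨_, fun j => hf _, rfl⟩, f 0, hf 0, ?_, ?_⟩
  · have h := congrArg Complex.im (piSum_mul_b n hn hf)
    rw [Complex.mul_im, bC_re, bC_im] at h
    simp only [Complex.add_im, Complex.intCast_im, zero_add] at h
    linarith [h]
  · have h := congrArg Complex.re (piSum_mul_b n hn hf)
    rw [Complex.mul_re, bC_re, bC_im] at h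
    simp only [Complex.add_re, Complex.intCast_re] at h
    linarith [h]

lemma II_rel (n : ℕ) (hn : 2 ≤ n) :
    ((n : ℝ) ^ 2 + 1) * II n ≤ (n : ℝ) ^ 2 + XX n + (n : ℝ) * II n := by
  have hq : (0 : ℝ) < (n : ℝ) ^ 2 + 1 := by positivity
  have key : ∀ z ∈ SS n, |z.im| ≤ ((n : ℝ) ^ 2 + XX n + (n : ℝ) * II n) / ((n : ℝ) ^ 2 + 1) := by
    intro z hz
    obtain ⟨w, hw, c, hc, h1, h2⟩ := SS_rel n hn hz
    have him : |w.im| ≤ II n := im_le_II n hn hw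
    have hre : |w.re| ≤ XX n := re_le_XX n hn hw
    have hcr : |(c : ℝ)| ≤ (n : ℝ) ^ 2 := by
      have : ((|c| : ℤ) : ℝ) ≤ (((n : ℤ) ^ 2 : ℤ) : ℝ) := by exact_mod_cast hc
      push_cast at this
      exact this
    rw [le_div_iff₀ hq]
    have hkey : ((n : ℝ) ^ 2 + 1) * z.im = -(c : ℝ) - w.re - (n : ℝ) * w.im := by
      linear_combination (-(n : ℝ)) * h1 - h2
    have habs : |((n : ℝ) ^ 2 + 1) * z.im| ≤ (n : ℝ) ^ 2 + XX n + (n : ℝ) * II n := by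
      rw [hkey]
      have t1 : |(-(c : ℝ) - w.re) - (n : ℝ) * w.im| ≤ |(-(c : ℝ) - w.re)| + |(n : ℝ) * w.im| :=
        abs_sub _ _
      have t2 : |(-(c : ℝ) - w.re)| ≤ |(c : ℝ)| + |w.re| := by
        calc |(-(c : ℝ) - w.re)| ≤ |(-(c:ℝ))| + |w.re| := abs_sub _ _
        _ = |(c : ℝ)| + |w.re| := by rw [abs_neg]
      have t3 : |(n : ℝ) * w.im| = (n : ℝ) * |w.im| := by
        rw [abs_mul, _root_.abs_of_nonneg (by positivity : (0:ℝ) ≤ (n:ℝ))]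
      have t4 : (n : ℝ) * |w.im| ≤ (n : ℝ) * II n :=
        mul_le_mul_of_nonneg_left him (by positivity)
      calc |(-(c : ℝ) - w.re) - (n : ℝ) * w.im| ≤ |(-(c : ℝ) - w.re)| + |(n : ℝ) * w.im| := t1
        _ ≤ (|(c : ℝ)| + |w.re|) + (n : ℝ) * |w.im| := by rw [t3]; linarith
        _ ≤ (n : ℝ) ^ 2 + XX n + (n : ℝ) * II n := by linarith
    rw [abs_mul, abs_of_pos hq] at habs
    linarith [habs]
  have := II_le n _ key
  rw [le_div_iff₀ hq] at this
  linarith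

lemma XX_rel (n : ℕ) (hn : 2 ≤ n) :
    ((n : ℝ) ^ 2 + 1) * XX n ≤ (n : ℝ) ^ 3 + (n : ℝ) * XX n + II n := by
  have hq : (0 : ℝ) < (n : ℝ) ^ 2 + 1 := by positivity
  have key : ∀ z ∈ SS n, |z.re| ≤ ((n : ℝ) ^ 3 + (n : ℝ) * XX n + II n) / ((n : ℝ) ^ 2 + 1) := by
    intro z hz
    obtain ⟨w, hw, c, hc, h1, h2⟩ := SS_rel n hn hz
    have him : |w.im| ≤ II n := im_le_II n hn hw
    have hre : |w.re| ≤ XX n := re_le_XX n hn hw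
    have hcr : |(c : ℝ)| ≤ (n : ℝ) ^ 2 := by
      have : ((|c| : ℤ) : ℝ) ≤ (((n : ℤ) ^ 2 : ℤ) : ℝ) := by exact_mod_cast hc
      push_cast at this
      exact this
    rw [le_div_iff₀ hq]
    have hkey : ((n : ℝ) ^ 2 + 1) * z.re = -(n : ℝ) * (c : ℝ) - (n : ℝ) * w.re + w.im := by
      linear_combination h1 - (n : ℝ) * h2
    have habs : |((n : ℝ) ^ 2 + 1) * z.re| ≤ (n : ℝ) ^ 3 + (n : ℝ) * XX n + II n := by
      rw [hkey]
      have hn0 : (0:ℝ) ≤ (n:ℝ) := by positivity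
      have t1 : |(-(n : ℝ) * (c : ℝ) - (n : ℝ) * w.re) + w.im|
          ≤ |(-(n : ℝ) * (c : ℝ) - (n : ℝ) * w.re)| + |w.im| := abs_add_le _ _
      have t2 : |(-(n : ℝ) * (c : ℝ) - (n : ℝ) * w.re)| ≤ (n:ℝ) * |(c : ℝ)| + (n:ℝ) * |w.re| := by
        calc |(-(n : ℝ) * (c : ℝ) - (n : ℝ) * w.re)|
            ≤ |(-(n : ℝ) * (c : ℝ))| + |(n : ℝ) * w.re| := abs_sub _ _
        _ = (n:ℝ) * |(c : ℝ)| + (n:ℝ) * |w.re| := by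
            rw [abs_mul, abs_mul, abs_neg, _root_.abs_of_nonneg hn0]
      have t4 : (n : ℝ) * |(c:ℝ)| ≤ (n : ℝ) * (n:ℝ)^2 := mul_le_mul_of_nonneg_left hcr hn0
      have t5 : (n : ℝ) * |w.re| ≤ (n : ℝ) * XX n := mul_le_mul_of_nonneg_left hre hn0
      calc |(-(n : ℝ) * (c : ℝ) - (n : ℝ) * w.re) + w.im|
          ≤ |(-(n : ℝ) * (c : ℝ) - (n : ℝ) * w.re)| + |w.im| := t1
        _ ≤ ((n:ℝ) * |(c : ℝ)| + (n:ℝ) * |w.re|) + |w.im| := by linarith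
        _ ≤ (n : ℝ) ^ 3 + (n : ℝ) * XX n + II n := by nlinarith
    rw [abs_mul, abs_of_pos hq] at habs
    linarith [habs]
  have := XX_le n _ key
  rw [le_div_iff₀ hq] at this
  linarith


lemma II_lt_two (n : ℕ) (hn : 3 ≤ n) : II n < 2 := by
  have hn2 : 2 ≤ n := by omega
  have hI := II_rel n hn2
  have hX := XX_rel n hn2
  have hI0 := II_nonneg n hn2
  have hX0 := XX_nonneg n hn2
  have hn3 : (3 : ℝ) ≤ (n : ℝ) := by exact_mod_cast hn
  set N := (n : ℝ)
  set u := N ^ 2 - N + 1 with hu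
  have hupos : (0 : ℝ) < u := by nlinarith
  have h1 : u * II n ≤ N ^ 2 + XX n := by nlinarith [hI]
  have h2 : u * XX n ≤ N ^ 3 + II n := by nlinarith [hX]
  have h3 : u * (u * II n) ≤ u * (N ^ 2 + XX n) := mul_le_mul_of_nonneg_left h1 hupos.le
  have h4 : u * u * II n ≤ u * N ^ 2 + N ^ 3 + II n := by nlinarith [h3, h2]
  -- (u^2 - 1) * I ≤ u n^2 + n^3 < 2 (u^2 - 1)
  have h5 : u * N ^ 2 + N ^ 3 < 2 * (u * u - 1) := by
    rw [hu]
    nlinarith [mul_nonneg (by positivity : (0:ℝ) ≤ N)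
      (mul_nonneg (by linarith : (0:ℝ) ≤ N - 3) (by nlinarith : (0:ℝ) ≤ N ^ 2 - N + 2)), hn3]
  have hu1 : (1:ℝ) ≤ u := by rw [hu]; nlinarith
  by_contra hcon
  push_neg at hcon
  have hkey : 0 ≤ (u * u - 1) * (II n - 2) :=
    mul_nonneg (by nlinarith) (by linarith)
  nlinarith [h4, h5, hkey]

lemma II_le_52 : II 2 ≤ 5 / 2 := by
  have hI := II_rel 2 (by norm_num)
  have hX := XX_rel 2 (by norm_num)
  norm_num at hI hX
  linarith

lemma int_le_one (n : ℕ) (hn : 2 ≤ n) (c : ℤ) (f : ℕ → ℤ) (hf : ∀ j, |f j| ≤ (n : ℤ) ^ 2)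
    (hc : (c : ℂ) = piSum (bC n) f) : |c| ≤ 1 := by
  have hw1 : piSum (bC n) (fun j => f (j + 1)) ∈ SS n := ⟨_, fun j => hf _, rfl⟩
  set w1 := piSum (bC n) (fun j => f (j + 1)) with hw1def
  have e1 := piSum_mul_b n hn hf
  rw [← hc] at e1
  have him : w1.im = (c : ℝ) := by
    have h := congrArg Complex.im e1
    rw [Complex.mul_im, bC_re, bC_im] at h
    simp only [Complex.add_im, Complex.intCast_im, Complex.intCast_re, zero_add] at h
    linarith [h]
  have hre : w1.re = -(n : ℝ) * (c : ℝ) - (f 0 : ℝ) := by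
    have h := congrArg Complex.re e1
    rw [Complex.mul_re, bC_re, bC_im] at h
    simp only [Complex.add_re, Complex.intCast_re, Complex.intCast_im] at h
    linarith [h]
  have hcI : |(c : ℝ)| ≤ II n := by
    rw [← him]
    exact im_le_II n hn hw1
  rcases Nat.lt_or_ge n 3 with h3 | h3
  · -- n = 2
    have hn2 : n = 2 := by omega
    subst hn2
    have hc2 : |(c : ℝ)| ≤ 5 / 2 := le_trans hcI II_le_52
    have hcint : |c| ≤ 2 := by
      have : ((|c| : ℤ) : ℝ) ≤ 5 / 2 := by rwa [Int.cast_abs]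
      by_contra hcon
      push_neg at hcon
      have : (3 : ℝ) ≤ ((|c| : ℤ) : ℝ) := by exact_mod_cast hcon
      linarith
    by_contra hcon
    push_neg at hcon
    have hcabs : |c| = 2 := by omega
    -- second step
    have hw2 : piSum (bC 2) (fun j => f (j + 1 + 1)) ∈ SS 2 := ⟨_, fun j => hf _, rfl⟩
    have e2 := piSum_mul_b 2 (le_refl 2) (f := fun j => f (j + 1)) (fun j => hf _)
    rw [← hw1def] at e2
    have him2 : (piSum (bC 2) (fun j => f (j + 1 + 1))).im
        = w1.re - 2 * w1.im := by
      have h := congrArg Complex.im e2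
      rw [Complex.mul_im, bC_re, bC_im] at h
      simp only [Complex.add_im, Complex.intCast_im, zero_add] at h
      push_cast at h ⊢
      linarith [h]
    have hle := im_le_II 2 (le_refl 2) hw2
    rw [him2, hre, him] at hle
    have hf04 : |f 0| ≤ (4:ℤ) := by
      have := hf 0; push_cast at this; linarith
    have hf0' := abs_le.mp hf04
    have hcc : c = 2 ∨ c = -2 := by
      rcases abs_eq (by norm_num : (0:ℤ) ≤ 2) |>.mp hcabs with h | h
      · exact Or.inl h
      · exact Or.inr h
    have h4 : (4 : ℤ) ≤ |(-(4 * c + f 0))| := by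
      rw [abs_neg]
      rcases hcc with rfl | rfl
      · rw [_root_.abs_of_nonneg (by omega)]; omega
      · rw [_root_.abs_of_nonpos (by omega)]; omega
    have hbig : (4 : ℝ) ≤ |-((2:ℕ):ℝ) * (c:ℝ) - (f 0 : ℝ) - 2 * (c:ℝ)| := by
      have heq : ((-(4 * c + f 0) : ℤ) : ℝ) = -((2:ℕ):ℝ) * (c:ℝ) - (f 0 : ℝ) - 2 * (c:ℝ) := by
        push_cast; ring
      rw [← heq, ← Int.cast_abs]
      exact_mod_cast h4
    have hII4 : (4:ℝ) ≤ II 2 := le_trans hbig hle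
    linarith [II_le_52]
  · -- n ≥ 3
    have := lt_of_le_of_lt hcI (II_lt_two n h3)
    have : ((|c| : ℤ) : ℝ) < 2 := by rwa [Int.cast_abs]
    have : |c| < 2 := by exact_mod_cast this
    omega

end Stmt5

theorem stmt_5 (n : ℕ) (hn : 2 ≤ n) (D : Set ℤ)
    (hD : D ⊆ Set.Icc 0 ((n : ℤ) ^ 2))
    (hsep : ∀ d ∈ D, ∀ d' ∈ D, |d - d'| ≠ 1)
    (k : ℕ) (hk : 1 ≤ k) (d d' : Fin k → ℤ)
    (hd : ∀ j, d j ∈ D) (hd' : ∀ j, d' j ∈ D)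
    (hne : ∃ j, d j ≠ d' j) :
    Disjoint (kTile (-(n : ℂ) + Complex.I) (fundTile n) k d)
      (kTile (-(n : ℂ) + Complex.I) (fundTile n) k d') := by
  classical
  open Stmt5 in
  rw [Set.disjoint_left]
  rintro z hz1 hz2
  obtain ⟨t1, ht1, he1⟩ := hz1
  obtain ⟨t2, ht2, he2⟩ := hz2
  obtain ⟨e1, hbd1, rfl⟩ := ht1
  obtain ⟨e2, hbd2, rfl⟩ := ht2
  have hb : (-(n : ℂ) + Complex.I) = Stmt5.bC n := rfl
  rw [hb] at he1 he2
  have hsq : (0:ℤ) ≤ (n:ℤ)^2 := by positivity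
  have hbd1' : ∀ j, |e1 j| ≤ (n:ℤ)^2 := fun j =>
    abs_le.mpr ⟨by linarith [(hbd1 j).1], (hbd1 j).2⟩
  have hbd2' : ∀ j, |e2 j| ≤ (n:ℤ)^2 := fun j =>
    abs_le.mpr ⟨by linarith [(hbd2 j).1], (hbd2 j).2⟩
  set G : ℕ → ℤ :=
    fun t => if h : t < k then d' ⟨t, h⟩ - d ⟨t, h⟩ else e2 (t - k) - e1 (t - k) with hGdef
  have hGbd : ∀ t, |G t| ≤ (n:ℤ)^2 := by
    intro t
    simp only [hGdef]
    split
    · rename_i h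
      have h1 := hD (hd ⟨t, h⟩)
      have h2 := hD (hd' ⟨t, h⟩)
      simp only [Set.mem_Icc] at h1 h2
      exact abs_le.mpr ⟨by linarith, by linarith⟩
    · have h1 := hbd1 (t - k)
      have h2 := hbd2 (t - k)
      exact abs_le.mpr ⟨by linarith, by linarith⟩
  set G1 : ℕ → ℤ := fun t => if t < k then G t else 0 with hG1def
  set G2 : ℕ → ℤ := fun t => if t < k then 0 else G t with hG2def
  have hG1bd : ∀ t, |G1 t| ≤ (n:ℤ)^2 := by
    intro t
    simp only [hG1def]
    split
    · exact hGbd t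
    · simpa using hsq
  have hG2bd : ∀ t, |G2 t| ≤ (n:ℤ)^2 := by
    intro t
    simp only [hG2def]
    split
    · simpa using hsq
    · exact hGbd t
  have hsplit : piSum (bC n) G = piSum (bC n) G1 + piSum (bC n) G2 := by
    rw [← piSum_add n hn hG1bd hG2bd]
    congr 1
    funext t
    simp only [hG1def, hG2def]
    split <;> simp
  have hfin : piSum (bC n) G1
      = (∑ j : Fin k, (d' j : ℂ) * (bC n) ^ (-((j : ℤ) + 1)))
        - (∑ j : Fin k, (d j : ℂ) * (bC n) ^ (-((j : ℤ) + 1))) := by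
    rw [piSum_fin n k G1 (fun t ht => by simp only [hG1def]; rw [if_neg (by omega)])]
    rw [← Finset.sum_sub_distrib]
    apply Finset.sum_congr rfl
    intro j _
    have hj : (j : ℕ) < k := j.isLt
    simp only [hG1def, hGdef, hj, if_true, dif_pos hj, Fin.eta]
    push_cast
    ring
  have hsh : piSum (bC n) G2
      = (bC n) ^ (-(k:ℤ)) * (piSum (bC n) e2 - piSum (bC n) e1) := by
    rw [piSum_shift n hn k hG2bd (fun t ht => by simp only [hG2def]; rw [if_pos ht])]
    congr 1
    have hfun : (fun t => G2 (t + k)) = (fun t => e2 t - e1 t) := by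
      funext t
      have h1 : ¬ (t + k < k) := by omega
      simp only [hG2def, hGdef, h1, if_false, Nat.add_sub_cancel]
      rw [dif_neg not_false]
    rw [hfun, piSum_sub n hn hbd2' hbd1']
  have htotal : piSum (bC n) G = 0 := by
    rw [hsplit, hfin, hsh]
    linear_combination he1 - he2
  have hzero : ∀ m, m < k → G m = 0 := by
    intro m
    induction m using Nat.strong_induction_on with
    | _ m ih =>
      intro hm
      have h0 : ∀ t, t < m → G t = 0 := fun t ht => ih t ht (ht.trans hm)
      have hs := piSum_shift n hn m hGbd h0
      rw [htotal] at hs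
      have hbm : (bC n) ^ (-(m:ℤ)) ≠ 0 := zpow_ne_zero _ (bC_ne_zero n)
      have h1 : piSum (bC n) (fun t => G (t + m)) = 0 := by
        rcases mul_eq_zero.mp hs.symm with h | h
        · exact absurd h hbm
        · exact h
      have h2 := piSum_mul_b n hn (f := fun t => G (t + m)) (fun t => hGbd _)
      rw [h1, zero_mul] at h2
      simp only [Nat.zero_add] at h2
      have hc : ((-G m : ℤ) : ℂ) = piSum (bC n) (fun j => G (j + 1 + m)) := by
        push_cast
        linear_combination h2
      have hle := int_le_one n hn (-G m) _ (fun j => hGbd _) hc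
      rw [abs_neg] at hle
      have hdm := hd ⟨m, hm⟩
      have hdm' := hd' ⟨m, hm⟩
      have hne1 := hsep (d' ⟨m, hm⟩) hdm' (d ⟨m, hm⟩) hdm
      have hGm : G m = d' ⟨m, hm⟩ - d ⟨m, hm⟩ := by simp only [hGdef, dif_pos hm]
      rw [hGm] at hle ⊢
      have habs0 : |d' ⟨m, hm⟩ - d ⟨m, hm⟩| = 0 := by
        have := abs_nonneg (d' ⟨m, hm⟩ - d ⟨m, hm⟩)
        omega
      exact abs_eq_zero.mp habs0
  obtain ⟨j, hj⟩ := hne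
  apply hj
  have h := hzero j j.isLt
  simp only [hGdef, dif_pos j.isLt, Fin.eta] at h
  omega
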